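/- For all positive integers m and n, the following identity of rational numbers holds: Σ_{k=1−n}^{n} (−1)^k k^m / (2n−2k+1) · binom(4n−1, 2n+2k−1) = Σ_{j=1}^{n} Σ_{k=1−j}^{j} 4^(n−j) (−1)^k k^m / (2n−2j+1) · binom(2n−1, 2j−1) · binom(2j−1, j−k). (In the paper the outer sum on the right runs over all j ≥ 1, but binom(2n−1, 2j−1) = 0 for j > n, so the sum truncates at j = n.) -/

import Mathlib

open Polynomial Finset

lemma coeff_one_add_X_sq_pow (s d : ℕ) :
    ((1 + X ^ 2 : ℕ[X]) ^ s).coeff d = if 2 ∣ d then s.choose (d / 2) else 0 := by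
  have h : (1 + X ^ 2 : ℕ[X]) ^ s = expand ℕ 2 ((1 + X) ^ s) := by
    rw [map_pow, map_add, map_one, expand_X]
  rw [h, coeff_expand (by norm_num)]
  split <;> simp [coeff_one_add_X_pow]

lemma keyP (n κ : ℕ) (h1 : 1 ≤ κ) (h2 : κ ≤ n) :
    Nat.choose (4 * n) (2 * n + 2 * κ - 1)
      = ∑ j ∈ Finset.Icc κ n,
          2 * 4 ^ (n - j) * Nat.choose (2 * n) (2 * j - 1) * Nat.choose (2 * j - 1) (j - κ) := by
  set M := 2 * n + 2 * κ - 1 with hM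
  set f : ℕ → ℕ := fun s => (2 * n).choose s * 2 ^ (2 * n - s)
      * (if 2 ∣ (M - (2 * n - s)) then s.choose ((M - (2 * n - s)) / 2) else 0) with hf
  have hpoly : ((1 + X : ℕ[X])) ^ (4 * n)
      = ∑ s ∈ range (2 * n + 1), (1 + X ^ 2) ^ s * (2 * X) ^ (2 * n - s)
          * (((2 * n).choose s : ℕ[X])) := by
    have : ((1 + X : ℕ[X])) ^ (4 * n) = ((1 + X ^ 2) + 2 * X) ^ (2 * n) := by
      rw [show 4 * n = 2 * (2 * n) by ring, pow_mul]
      ring_nf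
    rw [this, add_pow]
  have hA : (4 * n).choose M = ∑ s ∈ range (2 * n + 1), f s := by
    have := congrArg (fun p => Polynomial.coeff p M) hpoly
    simp only [coeff_one_add_X_pow, Nat.cast_id, finset_sum_coeff] at this
    rw [this]
    refine Finset.sum_congr rfl fun s hs => ?_
    rw [mem_range] at hs
    have hle : 2 * n - s ≤ M := by omega
    have heq : (1 + X ^ 2 : ℕ[X]) ^ s * (2 * X) ^ (2 * n - s) * ((2 * n).choose s : ℕ[X])
        = (((2 * n).choose s * 2 ^ (2 * n - s) : ℕ) : ℕ[X]) * ((1 + X ^ 2) ^ s * X ^ (2 * n - s)) := by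
      push_cast
      ring
    rw [heq, coeff_natCast_mul, coeff_mul_X_pow', if_pos hle, coeff_one_add_X_sq_pow, hf]
    push_cast
    ring
  rw [hA]
  have hsub : (Finset.Icc κ n).image (fun j => 2 * j - 1) ⊆ range (2 * n + 1) := by
    intro s hs
    simp only [mem_image, mem_Icc, mem_range] at hs ⊢
    omega
  have hzero : ∀ s ∈ range (2 * n + 1), s ∉ (Finset.Icc κ n).image (fun j => 2 * j - 1) → f s = 0 := by
    intro s hs hns
    simp only [mem_image, mem_Icc, mem_range] at hs hns
    rw [hf]
    dsimp only
    by_cases hpar : 2 ∣ (M - (2 * n - s))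
    · -- s must be odd; s = 2j-1 with j = (s+1)/2, and j < κ
      have hsodd : s % 2 = 1 := by
        rcases Nat.even_or_odd s with he | ho
        · exfalso
          obtain ⟨a, ha⟩ := he
          omega
        · omega
      obtain ⟨j, hj1, hjn, hsj⟩ : ∃ j, 1 ≤ j ∧ j ≤ n ∧ s = 2 * j - 1 :=
        ⟨(s + 1) / 2, by omega, by omega, by omega⟩
      have hjκ : j < κ := by
        by_contra hc
        exact hns ⟨j, ⟨by omega, hjn⟩, hsj.symm⟩
      -- then (M - (2n - s))/2 = j + κ - 1 > 2j - 1 = s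
      have harg : (M - (2 * n - s)) / 2 = j + κ - 1 := by omega
      have hz : s.choose (j + κ - 1) = 0 := Nat.choose_eq_zero_of_lt (by omega)
      rw [harg, hz]
      simp
    · simp [hpar]
  rw [← Finset.sum_subset hsub hzero,
    Finset.sum_image (fun a ha b hb h => by
      simp only [Finset.mem_coe, mem_Icc] at ha hb; omega)]
  refine Finset.sum_congr rfl fun j hj => ?_
  rw [mem_Icc] at hj
  rw [hf]
  dsimp only
  have h1' : 2 * n - (2 * j - 1) = 2 * (n - j) + 1 := by omega
  have h2' : M - (2 * n - (2 * j - 1)) = 2 * (j + κ - 1) := by omega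
  rw [h2', if_pos ⟨j + κ - 1, rfl⟩]
  have h3' : 2 * (j + κ - 1) / 2 = j + κ - 1 := by omega
  rw [h3', h1']
  have h4' : (2 * j - 1).choose (j + κ - 1) = (2 * j - 1).choose (j - κ) := by
    rw [← Nat.choose_symm (by omega)]
    congr 1
    omega
  rw [h4', pow_succ, pow_mul]
  ring

lemma keyK (n : ℕ) (hn : 0 < n) (k : ℤ) (hk1 : 1 - (n : ℤ) ≤ k) (hk2 : k ≤ (n : ℤ)) :
    Nat.choose (4 * n) (2 * (n : ℤ) + 2 * k - 1).toNat
      = ∑ j ∈ Finset.Icc (max k (1 - k)).toNat n,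
          2 * 4 ^ (n - j) * Nat.choose (2 * n) (2 * j - 1)
            * Nat.choose (2 * j - 1) ((j : ℤ) - k).toNat := by
  rcases le_or_gt 1 k with hpos | hneg
  · set κ := k.toNat with hκ
    have hκk : (κ : ℤ) = k := Int.toNat_of_nonneg (by omega)
    have h1 : 1 ≤ κ := by omega
    have h2 : κ ≤ n := by omega
    have hmax : (max k (1 - k)).toNat = κ := by omega
    have htn : (2 * (n : ℤ) + 2 * k - 1).toNat = 2 * n + 2 * κ - 1 := by omega
    rw [hmax, htn, keyP n κ h1 h2]
    refine Finset.sum_congr rfl fun j hj => ?_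
    rw [Finset.mem_Icc] at hj
    have : ((j : ℤ) - k).toNat = j - κ := by omega
    rw [this]
  · set κ := (1 - k).toNat with hκ
    have hκk : (κ : ℤ) = 1 - k := Int.toNat_of_nonneg (by omega)
    have h1 : 1 ≤ κ := by omega
    have h2 : κ ≤ n := by omega
    have hmax : (max k (1 - k)).toNat = κ := by omega
    have htn : (2 * (n : ℤ) + 2 * k - 1).toNat = 4 * n - (2 * n + 2 * κ - 1) := by omega
    have hsym : Nat.choose (4 * n) (4 * n - (2 * n + 2 * κ - 1))
        = Nat.choose (4 * n) (2 * n + 2 * κ - 1) := Nat.choose_symm (by omega)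
    rw [hmax, htn, hsym, keyP n κ h1 h2]
    refine Finset.sum_congr rfl fun j hj => ?_
    rw [Finset.mem_Icc] at hj
    have ht : ((j : ℤ) - k).toNat = (2 * j - 1) - (j - κ) := by omega
    have hsym2 : Nat.choose (2 * j - 1) ((2 * j - 1) - (j - κ))
        = Nat.choose (2 * j - 1) (j - κ) := Nat.choose_symm (by omega)
    rw [ht, hsym2]

/-- For all positive integers `m`, `n`:
`∑_{k=1−n}^{n} (−1)^k k^m/(2n−2k+1) ⬝ C(4n−1, 2n+2k−1)
  = ∑_{j=1}^{n} ∑_{k=1−j}^{j} 4^(n−j)(−1)^k k^m/(2n−2j+1) ⬝ C(2n−1, 2j−1) C(2j−1, j−k)`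
(the outer sum over `j ≥ 1` truncates at `j = n` since `C(2n−1, 2j−1) = 0` for `j > n`). -/
theorem combinatorial_identity_general_odd (m n : ℕ) (hm : 0 < m) (hn : 0 < n) :
    ∑ k ∈ Finset.Icc (1 - (n : ℤ)) (n : ℤ),
      (((k.negOnePow : ℤ) * k ^ m : ℤ) : ℚ) / (2 * (n : ℚ) - 2 * (k : ℚ) + 1) *
        (Nat.choose (4 * n - 1) (2 * (n : ℤ) + 2 * k - 1).toNat : ℚ)
    = ∑ j ∈ Finset.Icc 1 n, ∑ k ∈ Finset.Icc (1 - (j : ℤ)) (j : ℤ),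
        (4 : ℚ) ^ (n - j) *
          (((k.negOnePow : ℤ) * k ^ m : ℤ) : ℚ) / (2 * (n : ℚ) - 2 * (j : ℚ) + 1) *
          (Nat.choose (2 * n - 1) (2 * j - 1) : ℚ) *
          (Nat.choose (2 * j - 1) ((j : ℤ) - k).toNat : ℚ) := by
  -- abbreviations
  set c : ℤ → ℚ := fun k => (((k.negOnePow : ℤ) * k ^ m : ℤ) : ℚ) with hc
  -- Step 1: rewrite LHS terms
  have hL : ∀ k ∈ Finset.Icc (1 - (n : ℤ)) (n : ℤ),
      c k / (2 * (n : ℚ) - 2 * (k : ℚ) + 1) *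
        (Nat.choose (4 * n - 1) (2 * (n : ℤ) + 2 * k - 1).toNat : ℚ)
      = c k * (Nat.choose (4 * n) (2 * (n : ℤ) + 2 * k - 1).toNat : ℚ) / (4 * n) := by
    intro k hk
    rw [Finset.mem_Icc] at hk
    set r := (2 * (n : ℤ) + 2 * k - 1).toNat with hr
    have hnat : Nat.choose (4 * n - 1) r * (4 * n) = Nat.choose (4 * n) r * (4 * n - r) := by
      have := Nat.choose_mul_succ_eq (4 * n - 1) r
      have h4 : 4 * n - 1 + 1 = 4 * n := by omega
      rw [h4] at this
      exact this
    have hrle : r ≤ 4 * n := by omega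
    have hq : (Nat.choose (4 * n - 1) r : ℚ) * (4 * n)
        = (Nat.choose (4 * n) r : ℚ) * (2 * (n : ℚ) - 2 * (k : ℚ) + 1) := by
      have hcast : ((4 * n - r : ℕ) : ℚ) = 2 * (n : ℚ) - 2 * (k : ℚ) + 1 := by
        have hrq : ((r : ℕ) : ℚ) = 2 * (n : ℚ) + 2 * (k : ℚ) - 1 := by
          have : ((r : ℕ) : ℤ) = 2 * (n : ℤ) + 2 * k - 1 := by omega
          exact_mod_cast congrArg (fun x : ℤ => (x : ℚ)) this
        push_cast [Nat.cast_sub hrle]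
        rw [hrq]; ring
      calc (Nat.choose (4 * n - 1) r : ℚ) * (4 * n)
          = ((Nat.choose (4 * n - 1) r * (4 * n) : ℕ) : ℚ) := by push_cast; ring
        _ = ((Nat.choose (4 * n) r * (4 * n - r) : ℕ) : ℚ) := by rw [hnat]
        _ = (Nat.choose (4 * n) r : ℚ) * (2 * (n : ℚ) - 2 * (k : ℚ) + 1) := by
            push_cast [hcast]; ring
    have hd1 : (2 * (n : ℚ) - 2 * (k : ℚ) + 1) ≠ 0 := by
      have : (1 : ℚ) ≤ 2 * (n : ℚ) - 2 * (k : ℚ) + 1 := by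
        have : (1 : ℤ) ≤ 2 * (n : ℤ) - 2 * k + 1 := by omega
        exact_mod_cast this
      linarith
    have hd2 : (4 * (n : ℚ)) ≠ 0 := by positivity
    rw [div_mul_eq_mul_div, div_eq_div_iff hd1 hd2]
    linear_combination c k * hq
  rw [Finset.sum_congr rfl hL]
  -- Step 2: rewrite RHS terms
  have hR : ∀ j ∈ Finset.Icc 1 n, ∀ k ∈ Finset.Icc (1 - (j : ℤ)) (j : ℤ),
      (4 : ℚ) ^ (n - j) * c k / (2 * (n : ℚ) - 2 * (j : ℚ) + 1) *
          (Nat.choose (2 * n - 1) (2 * j - 1) : ℚ) *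
          (Nat.choose (2 * j - 1) ((j : ℤ) - k).toNat : ℚ)
      = c k * ((2 * 4 ^ (n - j) * Nat.choose (2 * n) (2 * j - 1)
          * Nat.choose (2 * j - 1) ((j : ℤ) - k).toNat : ℕ) : ℚ) / (4 * n) := by
    intro j hj k hk
    rw [Finset.mem_Icc] at hj hk
    have hnat : Nat.choose (2 * n - 1) (2 * j - 1) * (2 * n)
        = Nat.choose (2 * n) (2 * j - 1) * (2 * n - (2 * j - 1)) := by
      have := Nat.choose_mul_succ_eq (2 * n - 1) (2 * j - 1)
      have h4 : 2 * n - 1 + 1 = 2 * n := by omega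
      rw [h4] at this
      exact this
    have hq : (Nat.choose (2 * n - 1) (2 * j - 1) : ℚ) * (2 * n)
        = (Nat.choose (2 * n) (2 * j - 1) : ℚ) * (2 * (n : ℚ) - 2 * (j : ℚ) + 1) := by
      have hcast : ((2 * n - (2 * j - 1) : ℕ) : ℚ) = 2 * (n : ℚ) - 2 * (j : ℚ) + 1 := by
        have h5 : (2 * n - (2 * j - 1) : ℕ) = 2 * (n - j) + 1 := by omega
        rw [h5]
        push_cast [Nat.cast_sub hj.2]
        ring
      calc (Nat.choose (2 * n - 1) (2 * j - 1) : ℚ) * (2 * n)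
          = ((Nat.choose (2 * n - 1) (2 * j - 1) * (2 * n) : ℕ) : ℚ) := by push_cast; ring
        _ = ((Nat.choose (2 * n) (2 * j - 1) * (2 * n - (2 * j - 1)) : ℕ) : ℚ) := by rw [hnat]
        _ = (Nat.choose (2 * n) (2 * j - 1) : ℚ) * (2 * (n : ℚ) - 2 * (j : ℚ) + 1) := by
            push_cast [hcast]; ring
    have hd1 : (2 * (n : ℚ) - 2 * (j : ℚ) + 1) ≠ 0 := by
      have : (1 : ℚ) ≤ 2 * (n : ℚ) - 2 * (j : ℚ) + 1 := by
        have h6 : (1 : ℤ) ≤ 2 * (n : ℤ) - 2 * (j : ℤ) + 1 := by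
          have := hj.2; omega
        exact_mod_cast h6
      linarith
    have hd2 : (4 * (n : ℚ)) ≠ 0 := by positivity
    have h2n : (2 * (n : ℚ)) ≠ 0 := by positivity
    have hC1 : (Nat.choose (2 * n - 1) (2 * j - 1) : ℚ)
        = (Nat.choose (2 * n) (2 * j - 1) : ℚ) * (2 * (n : ℚ) - 2 * (j : ℚ) + 1) / (2 * n) := by
      rw [eq_div_iff h2n]; exact hq
    push_cast
    rw [hC1]
    have hinv : (2 * (n : ℚ) - 2 * (j : ℚ) + 1)⁻¹ * (2 * (n : ℚ) - 2 * (j : ℚ) + 1) = 1 := inv_mul_cancel₀ hd1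
    linear_combination (4:ℚ) ^ (n - j) * c k * (Nat.choose (2 * n) (2 * j - 1) : ℚ) * (Nat.choose (2 * j - 1) ((j : ℤ) - k).toNat : ℚ) / (2 * n) * hinv
  rw [Finset.sum_congr rfl fun j hj => Finset.sum_congr rfl (hR j hj)]
  -- Step 3: swap the RHS double sum
  rw [Finset.sum_comm' (s := Finset.Icc 1 n) (t := fun j => Finset.Icc (1 - (j : ℤ)) (j : ℤ))
      (t' := Finset.Icc (1 - (n : ℤ)) (n : ℤ))
      (s' := fun k => Finset.Icc (max k (1 - k)).toNat n)
      (by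
        intro j k
        simp only [Finset.mem_Icc]
        omega)]
  -- Step 4: per-k identity
  refine Finset.sum_congr rfl fun k hk => ?_
  rw [Finset.mem_Icc] at hk
  rw [← Finset.sum_div, ← Finset.mul_sum, ← Nat.cast_sum]
  rw [← keyK n hn k hk.1 hk.2]
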